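/- Let ψ be a finite-horizon choice function that is π-consistent and monotonic, and let u = V^π. Then for every state s, the root value satisfies V^ψ_u(s) ≥ V^π(s). -/

import Mathlib

open Finset

/-- A finite Markov Decision Process with transition kernel `P` and reward `R`. -/
structure MDP (S A : Type) [Fintype S] where
  P : S → A → S → ℝ
  R : S → A → ℝ
  P_nonneg : ∀ s a s', 0 ≤ P s a s'
  P_sum : ∀ s a, ∑ s', P s a s' = 1

/-- A state path: a root state followed by an alternating list of actions and states. -/
abbrev SPath (S A : Type) := S × List (A × S)

variable {S A : Type}

/-- The current (last) state of a path. -/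
def curS (p : SPath S A) : S := (p.2.getLast?.map Prod.snd).getD p.1

/-- Extend a path by an action and a successor state. -/
def extP (p : SPath S A) (a : A) (s' : S) : SPath S A := (p.1, p.2 ++ [(a, s')])

/-- Remove the first state-action pair of a path (identity on length-0 paths). -/
def dropFirst (p : SPath S A) : SPath S A :=
  match p with
  | (s₀, []) => (s₀, [])
  | (_, (_, s₁) :: rest) => (s₁, rest)

/-- The length-zero path consisting of a single root state. -/
def rootP (s : S) : SPath S A := (s, ([] : List (A × S)))

/-- `p` is ψ-satisfying: every action along the path is allowed by ψ at the
corresponding prefix. -/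
def SatCF (ψ : SPath S A → Finset A) (p : SPath S A) : Prop :=
  ∀ n (h : n < p.2.length), (p.2.get ⟨n, h⟩).1 ∈ ψ (p.1, p.2.take n)

/-- ψ is π-consistent: π's action is allowed at every non-leaf node. -/
def ConsistentCF (ψ : SPath S A → Finset A) (π : S → A) : Prop :=
  ∀ p, (ψ p).Nonempty → π (curS p) ∈ ψ p

/-- ψ is monotonic: `ψ(p;s) ⊆ ψ(⌟p;s)`. -/
def MonoCF (ψ : SPath S A → Finset A) : Prop :=
  ∀ p : SPath S A, ψ p ⊆ ψ (dropFirst p)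

/-- ψ has horizon at most H: every ψ-satisfying path of length ≥ H is a leaf. -/
def HorizonLE (ψ : SPath S A → Finset A) (H : ℕ) : Prop :=
  ∀ p : SPath S A, SatCF ψ p → H ≤ p.2.length → ψ p = ∅

/-- every leaf path of ψ has length at least h (min-horizon lower bound). -/
def MinLeaf (ψ : SPath S A → Finset A) (h : ℕ) : Prop :=
  ∀ p : SPath S A, SatCF ψ p → ψ p = ∅ → h ≤ p.2.length

variable [Fintype S] [Fintype A]

/-- Tree value with explicit fuel (remaining depth). -/
noncomputable def treeVal (M : MDP S A) (γ : ℝ) (ψ : SPath S A → Finset A)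
    (u : S → ℝ) : ℕ → SPath S A → ℝ
  | 0, p => u (curS p)
  | n + 1, p =>
      if h : (ψ p).Nonempty then
        (ψ p).sup' h fun a =>
          M.R (curS p) a + γ * ∑ s', M.P (curS p) a s' * treeVal M γ ψ u n (extP p a s')
      else u (curS p)

/-- `V^ψ_u(p;s)` for a choice function ψ of horizon H. -/
noncomputable def Vt (M : MDP S A) (γ : ℝ) (ψ : SPath S A → Finset A)
    (u : S → ℝ) (H : ℕ) (p : SPath S A) : ℝ :=
  treeVal M γ ψ u (H - p.2.length) p

/-- `Q^ψ_u(s;a)` at a root node. -/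
noncomputable def QrootCF (M : MDP S A) (γ : ℝ) (ψ : SPath S A → Finset A)
    (u : S → ℝ) (H : ℕ) (s : S) (a : A) : ℝ :=
  M.R s a + γ * ∑ s', M.P s a s' * Vt M γ ψ u H (extP (rootP s) a s')

/-- π' is a greedy root policy for the search tree of ψ with leaf evaluation u. -/
def IsGreedy (M : MDP S A) (γ : ℝ) (ψ : SPath S A → Finset A)
    (u : S → ℝ) (H : ℕ) (π' : S → A) : Prop :=
  ∀ s, π' s ∈ ψ (rootP s) ∧
    ∀ a ∈ ψ (rootP s), QrootCF M γ ψ u H s a ≤ QrootCF M γ ψ u H s (π' s)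

/-- `V` is the value function of the stationary policy π. -/
def IsValue (M : MDP S A) (γ : ℝ) (π : S → A) (V : S → ℝ) : Prop :=
  ∀ s, V s = M.R s (π s) + γ * ∑ s', M.P s (π s) s' * V s'

/-- Policy-restricted Bellman backup `B_π[V](s)`. -/
noncomputable def Bpol (M : MDP S A) (γ : ℝ) (π : S → A) (V : S → ℝ) (s : S) : ℝ :=
  M.R s (π s) + γ * ∑ s', M.P s (π s) s' * V s'

/-- Proposition (chaining): for a π-consistent monotonic finite-horizon ψ with
`u = V^π`, the root value satisfies `V^ψ_u(s) ≥ V^π(s)`. -/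
theorem stmt_2 {S A : Type} [Fintype S] [Fintype A]
    (M : MDP S A) (γ : ℝ) (hγ0 : 0 ≤ γ) (hγ1 : γ < 1)
    (π : S → A) (Vpi : S → ℝ) (hVpi : IsValue M γ π Vpi)
    (ψ : SPath S A → Finset A) (H : ℕ) (hfin : HorizonLE ψ H)
    (hcons : ConsistentCF ψ π) (hmono : MonoCF ψ) :
    ∀ s : S, Vpi s ≤ Vt M γ ψ Vpi H (rootP s) := by
  have key : ∀ n : ℕ, ∀ p : SPath S A, Vpi (curS p) ≤ treeVal M γ ψ Vpi n p := by
    intro n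
    induction n with
    | zero => intro p; simp [treeVal]
    | succ n ih =>
      intro p
      rw [treeVal]
      by_cases h : (ψ p).Nonempty
      · rw [dif_pos h]
        refine le_trans ?_ (Finset.le_sup' _ (hcons p h))
        have hcur : ∀ a s', curS (extP p a s') = s' := by
          intro a s'
          simp [curS, extP, List.getLast?_append]
        rw [hVpi (curS p)]
        refine add_le_add_right (mul_le_mul_of_nonneg_left ?_ hγ0) _
        refine Finset.sum_le_sum fun s' _ => ?_
        have := ih (extP p (π (curS p)) s')
        rw [hcur] at this
        exact mul_le_mul_of_nonneg_left this (M.P_nonneg _ _ _)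
      · rw [dif_neg h]
  intro s
  exact key (H - 0) (rootP s)
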